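/- Let A ⊆ 2^ω × 2^ω. If player I has a winning strategy in the two-dimensional measure game G_2(0, A), then player I has a winning strategy in the measure game G(0, B), where B = {x ∈ 2^ω : player I does not have a winning strategy in G(0, A_x)} and A_x = {y ∈ 2^ω : (x,y) ∈ A}. -/

import Mathlib

open MeasureTheory

namespace MeasureGame

/-- Cantor space `2^ω`. -/
abbrev Cantor : Type := ℕ → Bool

/-- The basic cylinder set `N_t` determined by a finite binary string `t`. -/
def cyl (t : List Bool) : Set Cantor := {x | ∀ i : Fin t.length, x i.1 = t.get i}

/-- A round of the measure game: player I's pair of rationals, then player II's bit. -/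
abbrev GRound : Type := (ℚ × ℚ) × Bool

/-- A strategy for player I in the measure game. -/
abbrev StratI : Type := List GRound → ℚ × ℚ

/-- A strategy for player II in the measure game. -/
abbrev StratII : Type := List GRound → ℚ × ℚ → Bool

/-- A run of the measure game. -/
abbrev Run : Type := ℕ → GRound

/-- The history (list of completed rounds) before round `n`. -/
def hist (r : Run) (n : ℕ) : List GRound := (List.range n).map r

/-- Player II's bit at round `n`. -/
def bits (r : Run) (n : ℕ) : Bool := (r n).2

/-- The finite binary string of player II's first `n` bits. -/
def path (r : Run) (n : ℕ) : List Bool := (List.range n).map (bits r)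

/-- The value player I assigned at round `n` to the one-bit extension of the current path by `b`. -/
def valI (r : Run) (n : ℕ) (b : Bool) : ℚ := if b then (r n).1.2 else (r n).1.1

/-- The value selected by player II's move at round `n`. -/
def sel (r : Run) (n : ℕ) : ℚ := valI r n (bits r n)

/-- Legality requirements on the single value player I assigned to `path r n ++ [b]`:
it is nonnegative, at most `μ(N_{t⌢b})`, and strictly below it when the latter is positive. -/
def mOK (μ : Measure Cantor) (r : Run) (n : ℕ) (b : Bool) : Prop :=
  0 ≤ valI r n b ∧ ((valI r n b : ℝ) ≤ (μ (cyl (path r n ++ [b]))).toReal) ∧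
    (0 < (μ (cyl (path r n ++ [b]))).toReal → (valI r n b : ℝ) < (μ (cyl (path r n ++ [b]))).toReal)

/-- Player I's move at round `n` of a run is legal (for the game `G(s, ·)`). -/
def IOK (μ : Measure Cantor) (s : ℝ) (r : Run) : ℕ → Prop
  | 0 => mOK μ r 0 false ∧ mOK μ r 0 true ∧ s < ((r 0).1.1 : ℝ) + ((r 0).1.2 : ℝ)
  | (n + 1) => mOK μ r (n + 1) false ∧ mOK μ r (n + 1) true ∧
      (r (n + 1)).1.1 + (r (n + 1)).1.2 = sel r n

/-- Player II's move at round `n` of a run is legal: the selected value is nonzero. -/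
def IIOK (r : Run) (n : ℕ) : Prop := sel r n ≠ 0

/-- The run `r` is consistent with player I's strategy `σ`. -/
def ConsI (σ : StratI) (r : Run) : Prop := ∀ n, (r n).1 = σ (hist r n)

/-- The run `r` is consistent with player II's strategy `τ`. -/
def ConsII (τ : StratII) (r : Run) : Prop := ∀ n, (r n).2 = τ (hist r n) (r n).1

/-- Player II wins the run `r` of `G(s, A)`: either player I is the first to break a rule,
or all rules are followed and the sequence of II's bits belongs to `A`. -/
def IIWinsRun (μ : Measure Cantor) (s : ℝ) (A : Set Cantor) (r : Run) : Prop :=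
  (∃ n, (∀ m < n, IOK μ s r m ∧ IIOK r m) ∧ ¬ IOK μ s r n) ∨
    ((∀ n, IOK μ s r n ∧ IIOK r n) ∧ bits r ∈ A)

/-- Player I has a winning strategy in the measure game `G(s, A)`. -/
def WinsI (μ : Measure Cantor) (s : ℝ) (A : Set Cantor) : Prop :=
  ∃ σ : StratI, ∀ r : Run, ConsI σ r → ¬ IIWinsRun μ s A r

/-- Player II has a winning strategy in the measure game `G(s, A)`. -/
def WinsII (μ : Measure Cantor) (s : ℝ) (A : Set Cantor) : Prop :=
  ∃ τ : StratII, ∀ r : Run, ConsII τ r → IIWinsRun μ s A r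

/-- The outer measure `μ*(A) = inf {μ(U) : U open, A ⊆ U}`. -/
noncomputable def outerM (μ : Measure Cantor) (A : Set Cantor) : ℝ :=
  sInf {v : ℝ | ∃ U : Set Cantor, IsOpen U ∧ A ⊆ U ∧ v = (μ U).toReal}

/-- The inner measure `μ_*(A) = sup {μ(F) : F closed, F ⊆ A}`. -/
noncomputable def innerM (μ : Measure Cantor) (A : Set Cantor) : ℝ :=
  sSup {v : ℝ | ∃ F : Set Cantor, IsClosed F ∧ F ⊆ A ∧ v = (μ F).toReal}


/-! The two-dimensional measure game `G₂(s, A)` for `A ⊆ 2^ω × 2^ω`, played with respect to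
the product measure `μ × μ`. -/

/-- A round of the two-dimensional game: player I's quadruple of rationals (indexed by
`Bool × Bool`), then player II's pair of bits. -/
abbrev GRound2 : Type := ((Bool × Bool) → ℚ) × (Bool × Bool)

/-- A strategy for player I in the two-dimensional game. -/
abbrev StratI2 : Type := List GRound2 → ((Bool × Bool) → ℚ)

/-- A strategy for player II in the two-dimensional game. -/
abbrev StratII2 : Type := List GRound2 → ((Bool × Bool) → ℚ) → Bool × Bool

/-- A run of the two-dimensional game. -/
abbrev Run2 : Type := ℕ → GRound2

def hist2 (r : Run2) (n : ℕ) : List GRound2 := (List.range n).map r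

def bits2 (r : Run2) (n : ℕ) : Bool × Bool := (r n).2

def path2 (r : Run2) (n : ℕ) : List (Bool × Bool) := (List.range n).map (bits2 r)

/-- The rectangle `N_{u₀} × N_{u₁}` determined by `u ∈ (2 × 2)^{<ω}`. -/
def rect (u : List (Bool × Bool)) : Set (Cantor × Cantor) :=
  cyl (u.map Prod.fst) ×ˢ cyl (u.map Prod.snd)

def valI2 (r : Run2) (n : ℕ) (b : Bool × Bool) : ℚ := (r n).1 b

/-- The value selected by player II's move at round `n`. -/
def sel2 (r : Run2) (n : ℕ) : ℚ := valI2 r n (bits2 r n)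

def mOK2 (μ : Measure Cantor) (r : Run2) (n : ℕ) (b : Bool × Bool) : Prop :=
  0 ≤ valI2 r n b ∧
    ((valI2 r n b : ℝ) ≤ ((μ.prod μ) (rect (path2 r n ++ [b]))).toReal) ∧
    (0 < ((μ.prod μ) (rect (path2 r n ++ [b]))).toReal →
      (valI2 r n b : ℝ) < ((μ.prod μ) (rect (path2 r n ++ [b]))).toReal)

def IOK2 (μ : Measure Cantor) (s : ℝ) (r : Run2) : ℕ → Prop
  | 0 => (∀ b : Bool × Bool, mOK2 μ r 0 b) ∧ s < ∑ b : Bool × Bool, ((r 0).1 b : ℝ)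
  | (n + 1) => (∀ b : Bool × Bool, mOK2 μ r (n + 1) b) ∧
      (∑ b : Bool × Bool, (r (n + 1)).1 b) = sel2 r n

def IIOK2 (r : Run2) (n : ℕ) : Prop := sel2 r n ≠ 0

def ConsI2 (σ : StratI2) (r : Run2) : Prop := ∀ n, (r n).1 = σ (hist2 r n)

def ConsII2 (τ : StratII2) (r : Run2) : Prop := ∀ n, (r n).2 = τ (hist2 r n) (r n).1

/-- Player II wins the run `r` of `G₂(s, A)`: either player I is the first to break a rule,
or all rules are followed and the pair of coordinate sequences of II's moves lies in `A`. -/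
def IIWinsRun2 (μ : Measure Cantor) (s : ℝ) (A : Set (Cantor × Cantor)) (r : Run2) : Prop :=
  (∃ n, (∀ m < n, IOK2 μ s r m ∧ IIOK2 r m) ∧ ¬ IOK2 μ s r n) ∨
    ((∀ n, IOK2 μ s r n ∧ IIOK2 r n) ∧
      ((fun n => (bits2 r n).1, fun n => (bits2 r n).2) : Cantor × Cantor) ∈ A)

/-- Player I has a winning strategy in the two-dimensional game `G₂(s, A)`. -/
def WinsI2 (μ : Measure Cantor) (s : ℝ) (A : Set (Cantor × Cantor)) : Prop :=
  ∃ σ : StratI2, ∀ r : Run2, ConsI2 σ r → ¬ IIWinsRun2 μ s A r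

/-- Player II has a winning strategy in the two-dimensional game `G₂(s, A)`. -/
def WinsII2 (μ : Measure Cantor) (s : ℝ) (A : Set (Cantor × Cantor)) : Prop :=
  ∃ τ : StratII2, ∀ r : Run2, ConsII2 τ r → IIWinsRun2 μ s A r

/-! ### Cylinder lemmas -/

lemma mem_cyl_iff {t : List Bool} {y : Cantor} :
    y ∈ cyl t ↔ ∀ i, (h : i < t.length) → y i = t.get ⟨i, h⟩ := by
  constructor
  · intro hy i h; exact hy ⟨i, h⟩
  · intro hy i; exact hy i.1 i.2

lemma cyl_nil : cyl ([] : List Bool) = Set.univ := by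
  ext y; simp [cyl]

lemma mem_cyl_concat {t : List Bool} {b : Bool} {y : Cantor} :
    y ∈ cyl (t ++ [b]) ↔ y ∈ cyl t ∧ y t.length = b := by
  simp only [mem_cyl_iff]
  constructor
  · intro h
    refine ⟨fun i hi => ?_, ?_⟩
    · have := h i (by simp; omega)
      rwa [List.get_eq_getElem, List.getElem_append_left hi] at this
    · have := h t.length (by simp)
      simpa using this
  · rintro ⟨h1, h2⟩ i hi
    rcases lt_or_ge i t.length with hl | hl
    · rw [List.get_eq_getElem, List.getElem_append_left hl]; exact h1 i hl
    · have hit : i = t.length := by simp at hi; omega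
      subst hit; simpa using h2

lemma cyl_concat (t : List Bool) (b : Bool) :
    cyl (t ++ [b]) = cyl t ∩ {y | y t.length = b} := by
  ext y; exact mem_cyl_concat

lemma measurableSet_cyl (t : List Bool) : MeasurableSet (cyl t) := by
  have : cyl t = ⋂ i : Fin t.length, (fun y : Cantor => y i.1) ⁻¹' {t.get i} := by
    ext y; simp [cyl, Set.mem_iInter]
  rw [this]
  exact MeasurableSet.iInter fun i => (measurable_pi_apply i.1) (measurableSet_singleton _)

lemma isOpen_cyl (t : List Bool) : IsOpen (cyl t) := by
  have : cyl t = ⋂ i : Fin t.length, (fun y : Cantor => y i.1) ⁻¹' {t.get i} := by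
    ext y; simp [cyl, Set.mem_iInter]
  rw [this]
  exact isOpen_iInter_of_finite fun i =>
    (continuous_apply i.1).isOpen_preimage _ (isOpen_discrete _)

lemma mem_cyl_range_map {x y : Cantor} {n : ℕ} :
    y ∈ cyl ((List.range n).map x) ↔ ∀ i < n, y i = x i := by
  simp only [mem_cyl_iff, List.length_map, List.length_range]
  constructor
  · intro h i hi
    have := h i hi
    simpa using this
  · intro h i hi
    simpa using h i hi

lemma self_mem_cyl_range_map {x : Cantor} {n : ℕ} :
    x ∈ cyl ((List.range n).map x) :=
  mem_cyl_range_map.2 fun _ _ => rfl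

/-- A point all of whose cylinder prefixes meet a closed set `F` lies in `F`. -/
lemma mem_closed_of_cyl_nonempty {F : Set Cantor} (hF : IsClosed F) (x : Cantor)
    (h : ∀ n, (cyl ((List.range n).map x) ∩ F).Nonempty) : x ∈ F := by
  by_contra hx
  have hop : IsOpen Fᶜ := hF.isOpen_compl
  obtain ⟨I, u, hIu, hsub⟩ := (isOpen_pi_iff.1 hop) x hx
  set N := I.sup id + 1 with hN
  obtain ⟨y, hy1, hy2⟩ := h N
  have : y ∈ (I : Set ℕ).pi u := by
    intro i hi
    have hiN : i < N := by
      have : i ≤ I.sup id := Finset.le_sup (f := id) hi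
      omega
    have : y i = x i := mem_cyl_range_map.1 hy1 i hiN
    rw [this]
    exact (hIu i hi).2
  exact (hsub this) hy2
/-! ### Lemma C: a closed positive-measure subset of `Cᶜ` gives player I a win in `G(0, C)` -/

/-- Conditional mass of `F` in the cylinder `t`. -/
noncomputable def nuF (μ : Measure Cantor) (F : Set Cantor) (t : List Bool) : ℝ :=
  (μ (cyl t ∩ F)).toReal

lemma nuF_nonneg (μ : Measure Cantor) (F : Set Cantor) (t : List Bool) : 0 ≤ nuF μ F t :=
  ENNReal.toReal_nonneg

lemma nuF_le (μ : Measure Cantor) [IsProbabilityMeasure μ] (F : Set Cantor) (t : List Bool) :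
    nuF μ F t ≤ (μ (cyl t)).toReal :=
  ENNReal.toReal_mono (measure_ne_top μ _) (measure_mono Set.inter_subset_left)

lemma nuF_split (μ : Measure Cantor) [IsProbabilityMeasure μ] {F : Set Cantor}
    (_hF : MeasurableSet F) (t : List Bool) :
    nuF μ F t = nuF μ F (t ++ [false]) + nuF μ F (t ++ [true]) := by
  have hE : MeasurableSet {y : Cantor | y t.length = false} :=
    (measurable_pi_apply t.length) (measurableSet_singleton _)
  have h1 : cyl (t ++ [false]) ∩ F = (cyl t ∩ F) ∩ {y | y t.length = false} := by
    rw [cyl_concat]; ext y; simp [Set.mem_inter_iff]; tauto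
  have h2 : cyl (t ++ [true]) ∩ F = (cyl t ∩ F) \ {y | y t.length = false} := by
    rw [cyl_concat]; ext y
    simp only [Set.mem_inter_iff, Set.mem_diff, Set.mem_setOf_eq]
    constructor
    · rintro ⟨⟨hc, hb⟩, hf⟩; exact ⟨⟨hc, hf⟩, by simp [hb]⟩
    · rintro ⟨⟨hc, hf⟩, hb⟩; exact ⟨⟨hc, by simpa using hb⟩, hf⟩
  have hadd : μ (cyl (t ++ [false]) ∩ F) + μ (cyl (t ++ [true]) ∩ F) = μ (cyl t ∩ F) := by
    rw [h1, h2]; exact measure_inter_add_diff _ hE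
  rw [nuF, nuF, nuF, ← hadd, ENNReal.toReal_add (measure_ne_top μ _) (measure_ne_top μ _)]

/-- Splitting a positive rational below `a + b` into legal child values. -/
lemma exists_split (q : ℚ) (a b : ℝ) (h0 : 0 < q) (hq : (q : ℝ) < a + b) :
    ∃ p : ℚ × ℚ, p.1 + p.2 = q ∧ 0 ≤ p.1 ∧ 0 ≤ p.2 ∧
      (0 < p.1 → (p.1 : ℝ) < a) ∧ (0 < p.2 → (p.2 : ℝ) < b) := by
  rcases lt_or_ge (q : ℝ) b with h | h
  · exact ⟨(0, q), by simp, le_rfl, h0.le, fun h' => absurd h' (lt_irrefl 0), fun _ => h⟩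
  rcases lt_or_ge (q : ℝ) a with h2 | h2
  · exact ⟨(q, 0), by simp, h0.le, le_rfl, fun _ => h2, fun h' => absurd h' (lt_irrefl 0)⟩
  have hab : (q : ℝ) - b < a := by linarith
  obtain ⟨r, hr1, hr2⟩ := exists_rat_btwn hab
  have hrpos : (0 : ℝ) < (r : ℝ) := lt_of_le_of_lt (by linarith) hr1
  have hrq : r < q := by exact_mod_cast lt_of_lt_of_le hr2 h2
  refine ⟨(r, q - r), by ring, ?_, ?_, fun _ => hr2, fun _ => ?_⟩
  · show (0 : ℚ) ≤ r
    exact_mod_cast hrpos.le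
  · show (0 : ℚ) ≤ q - r
    linarith
  · show ((q - r : ℚ) : ℝ) < b
    push_cast
    linarith

open Classical in
noncomputable def splitPair (μ : Measure Cantor) (F : Set Cantor) (t : List Bool) (q : ℚ) :
    ℚ × ℚ :=
  if h : 0 < q ∧ (q : ℝ) < nuF μ F (t ++ [false]) + nuF μ F (t ++ [true]) then
    (exists_split q _ _ h.1 h.2).choose
  else (q, 0)

lemma splitPair_sum (μ : Measure Cantor) (F : Set Cantor) (t : List Bool) (q : ℚ) :
    (splitPair μ F t q).1 + (splitPair μ F t q).2 = q := by
  unfold splitPair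
  split
  next h => exact (exists_split q _ _ h.1 h.2).choose_spec.1
  next => simp

lemma splitPair_spec (μ : Measure Cantor) (F : Set Cantor) (t : List Bool) (q : ℚ)
    (h0 : 0 < q) (hq : (q : ℝ) < nuF μ F (t ++ [false]) + nuF μ F (t ++ [true])) :
    0 ≤ (splitPair μ F t q).1 ∧ 0 ≤ (splitPair μ F t q).2 ∧
      (0 < (splitPair μ F t q).1 → ((splitPair μ F t q).1 : ℝ) < nuF μ F (t ++ [false])) ∧
      (0 < (splitPair μ F t q).2 → ((splitPair μ F t q).2 : ℝ) < nuF μ F (t ++ [true])) := by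
  have h := (exists_split q _ _ h0 hq).choose_spec
  unfold splitPair
  rw [dif_pos ⟨h0, hq⟩]
  exact ⟨h.2.1, h.2.2.1, h.2.2.2.1, h.2.2.2.2⟩

lemma splitPair_zero (μ : Measure Cantor) (F : Set Cantor) (t : List Bool) :
    splitPair μ F t 0 = (0, 0) := by
  unfold splitPair
  rw [dif_neg (by simp)]

noncomputable def vrev (μ : Measure Cantor) (F : Set Cantor) (q0 : ℚ) : List Bool → ℚ
  | [] => q0
  | b :: s =>
      if b then (splitPair μ F s.reverse (vrev μ F q0 s)).2
      else (splitPair μ F s.reverse (vrev μ F q0 s)).1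

noncomputable def vfun (μ : Measure Cantor) (F : Set Cantor) (q0 : ℚ) (t : List Bool) : ℚ :=
  vrev μ F q0 t.reverse

lemma vfun_nil (μ : Measure Cantor) (F : Set Cantor) (q0 : ℚ) : vfun μ F q0 [] = q0 := rfl

lemma vfun_concat (μ : Measure Cantor) (F : Set Cantor) (q0 : ℚ) (t : List Bool) (b : Bool) :
    vfun μ F q0 (t ++ [b]) =
      if b then (splitPair μ F t (vfun μ F q0 t)).2 else (splitPair μ F t (vfun μ F q0 t)).1 := by
  simp [vfun, vrev, List.reverse_append]

lemma winsI_of_closed (μ : Measure Cantor) [IsProbabilityMeasure μ] (C F : Set Cantor)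
    (hFc : IsClosed F) (hFC : ∀ x ∈ F, x ∉ C) (hpos : 0 < μ F) : WinsI μ 0 C := by
  have hFm : MeasurableSet F := hFc.measurableSet
  have hnu0 : (0 : ℝ) < nuF μ F [] := by
    rw [nuF, cyl_nil, Set.univ_inter]
    exact ENNReal.toReal_pos hpos.ne' (measure_ne_top μ F)
  obtain ⟨q0, hq0a, hq0b⟩ := exists_rat_btwn hnu0
  have hq0 : 0 < q0 := by exact_mod_cast hq0a
  set v : List Bool → ℚ := vfun μ F q0 with hv
  refine ⟨fun h => splitPair μ F (h.map (fun p => p.2)) (v (h.map (fun p => p.2))), ?_⟩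
  intro r hcons
  have hpathmap : ∀ n, (hist r n).map (fun p => p.2) = path r n := by
    intro n; simp [hist, path, bits, List.map_map]
  have hr1 : ∀ n, (r n).1 = splitPair μ F (path r n) (v (path r n)) := by
    intro n; rw [hcons n]; simp only [hpathmap]
  have hpathsucc : ∀ n, path r (n + 1) = path r n ++ [bits r n] := by
    intro n; simp [path, List.range_succ]
  have hvb : ∀ n b, valI r n b = v (path r n ++ [b]) := by
    intro n b
    rw [hv, vfun_concat]
    cases b <;> simp [valI, hr1 n, hv]
  have hsel : ∀ n, sel r n = v (path r (n + 1)) := by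
    intro n; rw [sel, hvb, ← hpathsucc]
  have hsum : ∀ n, (r n).1.1 + (r n).1.2 = v (path r n) := by
    intro n; rw [hr1 n]; exact splitPair_sum _ _ _ _
  have hpath0 : path r 0 = [] := by simp [path]
  -- the invariant
  have hP : ∀ n, v (path r n) = 0 ∨
      (0 < v (path r n) ∧ ((v (path r n) : ℝ)) < nuF μ F (path r n)) := by
    intro n
    induction n with
    | zero =>
      right
      rw [hpath0]
      exact ⟨hq0, hq0b⟩
    | succ n ih =>
      rcases ih with h0 | ⟨hqp, hlt⟩
      · left
        rw [hpathsucc n, hv, vfun_concat, ← hv, h0, splitPair_zero]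
        cases bits r n <;> simp
      · have hcond : (v (path r n) : ℝ) < nuF μ F (path r n ++ [false]) + nuF μ F (path r n ++ [true]) := by
          rw [← nuF_split μ hFm]; exact hlt
        have hspec := splitPair_spec μ F (path r n) (v (path r n)) hqp hcond
        have hvcomp : v (path r (n + 1)) =
            (if bits r n then (splitPair μ F (path r n) (v (path r n))).2
             else (splitPair μ F (path r n) (v (path r n))).1) := by
          rw [hpathsucc, hv, vfun_concat]
        cases hb : bits r n
        · rw [hb] at hvcomp; simp only [if_neg Bool.false_ne_true] at hvcomp
          rcases eq_or_lt_of_le hspec.1 with h | h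
          · left; rw [hvcomp, ← h]
          · right
            refine ⟨by rw [hvcomp]; exact h, ?_⟩
            rw [hvcomp, hpathsucc, hb]
            exact hspec.2.2.1 h
        · rw [hb] at hvcomp; simp only [if_pos] at hvcomp
          rcases eq_or_lt_of_le hspec.2.1 with h | h
          · left; rw [hvcomp, ← h]
          · right
            refine ⟨by rw [hvcomp]; exact h, ?_⟩
            rw [hvcomp, hpathsucc, hb]
            exact hspec.2.2.2 h
  -- player I's moves are always legal
  have hmOK : ∀ n b, mOK μ r n b := by
    intro n b
    rcases hP n with h0 | ⟨hqp, hlt⟩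
    · have : valI r n b = 0 := by
        rw [hvb n b, hv, vfun_concat, ← hv, h0, splitPair_zero]
        cases b <;> simp
      refine ⟨le_of_eq this.symm, ?_, ?_⟩
      · rw [this]; simpa using ENNReal.toReal_nonneg
      · intro hpos'; rw [this]; simpa using hpos'
    · have hcond : (v (path r n) : ℝ) < nuF μ F (path r n ++ [false]) + nuF μ F (path r n ++ [true]) := by
        rw [← nuF_split μ hFm]; exact hlt
      have hspec := splitPair_spec μ F (path r n) (v (path r n)) hqp hcond
      have hnn : 0 ≤ valI r n b := by
        rw [hvb n b, hv, vfun_concat, ← hv]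
        cases b
        · simpa using hspec.1
        · simpa using hspec.2.1
      have hub : 0 < valI r n b → ((valI r n b : ℝ)) < nuF μ F (path r n ++ [b]) := by
        intro hp
        rw [hvb n b, hv, vfun_concat, ← hv] at hp ⊢
        cases b
        · simpa using hspec.2.2.1 (by simpa using hp)
        · simpa using hspec.2.2.2 (by simpa using hp)
      refine ⟨hnn, ?_, ?_⟩
      · rcases eq_or_lt_of_le hnn with h | h
        · rw [← h]; simpa using ENNReal.toReal_nonneg
        · exact le_of_lt (lt_of_lt_of_le (hub h) (nuF_le μ F _))
      · intro _
        rcases eq_or_lt_of_le hnn with h | h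
        · rw [← h]; simpa using ‹0 < (μ (cyl (path r n ++ [b]))).toReal›
        · exact lt_of_lt_of_le (hub h) (nuF_le μ F _)
  have hIOK : ∀ n, IOK μ 0 r n := by
    intro n
    cases n with
    | zero =>
      refine ⟨hmOK 0 false, hmOK 0 true, ?_⟩
      have : (r 0).1.1 + (r 0).1.2 = q0 := by
        rw [hsum 0, hpath0]; exact vfun_nil μ F q0
      have hq : (0 : ℝ) < ((r 0).1.1 + (r 0).1.2 : ℚ) := by rw [this]; exact_mod_cast hq0
      push_cast at hq
      simpa using hq
    | succ n =>
      refine ⟨hmOK (n + 1) false, hmOK (n + 1) true, ?_⟩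
      rw [hsum (n + 1), hsel n]
  -- conclude
  intro hw
  rcases hw with ⟨n, _, hnot⟩ | ⟨hall, hmem⟩
  · exact hnot (hIOK n)
  · have hinv : ∀ n, 0 < v (path r n) ∧ ((v (path r n) : ℝ)) < nuF μ F (path r n) := by
      intro n
      rcases hP n with h0 | h
      · exfalso
        cases n with
        | zero =>
          rw [hpath0] at h0
          exact hq0.ne' (by simpa [hv, vfun_nil] using h0)
        | succ m =>
          have hii : sel r m ≠ 0 := (hall m).2
          rw [hsel m] at hii
          exact hii h0
      · exact h
    have hne : ∀ n, (cyl (path r n) ∩ F).Nonempty := by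
      intro n
      apply nonempty_of_measure_ne_zero
      intro hz
      have h1 := hinv n
      have h2 : nuF μ F (path r n) = 0 := by rw [nuF, hz]; simp
      have h3 : (0 : ℝ) < (v (path r n) : ℝ) := by exact_mod_cast h1.1
      linarith [h1.2]
    have hxF : bits r ∈ F :=
      mem_closed_of_cyl_nonempty hFc (bits r) (fun n => hne n)
    exact hFC _ hxF hmem
/-! ### Lemma A: player I winning `G₂(0,A)` yields a closed positive-measure subset of `Aᶜ` -/

def Hrev (σ : StratI2) : List (Bool × Bool) → List GRound2
  | [] => []
  | b :: s => Hrev σ s ++ [(σ (Hrev σ s), b)]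

/-- The history of the run in which II plays the string `u` and I follows `σ`. -/
def Hs (σ : StratI2) (u : List (Bool × Bool)) : List GRound2 := Hrev σ u.reverse

lemma Hs_nil (σ : StratI2) : Hs σ [] = [] := rfl

lemma Hs_concat (σ : StratI2) (u : List (Bool × Bool)) (b : Bool × Bool) :
    Hs σ (u ++ [b]) = Hs σ u ++ [(σ (Hs σ u), b)] := by
  simp [Hs, Hrev, List.reverse_append]

/-- The value `σ` assigns to the one-step extension of `u` by `b`. -/
def val2 (σ : StratI2) (u : List (Bool × Bool)) (b : Bool × Bool) : ℚ := σ (Hs σ u) b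

/-- The run in which II plays `z` and I follows `σ`. -/
def runOf (σ : StratI2) (z : ℕ → Bool × Bool) : Run2 :=
  fun n => (σ (Hs σ ((List.range n).map z)), z n)

lemma prefix_succ {α : Type*} (z : ℕ → α) (n : ℕ) :
    (List.range (n + 1)).map z = (List.range n).map z ++ [z n] := by
  simp [List.range_succ]

lemma hist2_runOf (σ : StratI2) (z : ℕ → Bool × Bool) (n : ℕ) :
    hist2 (runOf σ z) n = Hs σ ((List.range n).map z) := by
  induction n with
  | zero => simp [hist2, Hs, Hrev]
  | succ n ih =>
    have h1 : hist2 (runOf σ z) (n + 1) = hist2 (runOf σ z) n ++ [runOf σ z n] := by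
      simp [hist2, List.range_succ]
    rw [h1, ih, prefix_succ, Hs_concat]
    rfl

lemma consI2_runOf (σ : StratI2) (z : ℕ → Bool × Bool) : ConsI2 σ (runOf σ z) := by
  intro n; rw [hist2_runOf]; rfl

lemma bits2_runOf (σ : StratI2) (z : ℕ → Bool × Bool) (n : ℕ) :
    bits2 (runOf σ z) n = z n := rfl

lemma path2_runOf (σ : StratI2) (z : ℕ → Bool × Bool) (n : ℕ) :
    path2 (runOf σ z) n = (List.range n).map z := by
  simp [path2, bits2, runOf]

lemma valI2_runOf (σ : StratI2) (z : ℕ → Bool × Bool) (n : ℕ) (b : Bool × Bool) :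
    valI2 (runOf σ z) n b = val2 σ ((List.range n).map z) b := rfl

lemma sel2_runOf (σ : StratI2) (z : ℕ → Bool × Bool) (n : ℕ) :
    sel2 (runOf σ z) n = val2 σ ((List.range n).map z) (z n) := rfl

def goodRev (σ : StratI2) : List (Bool × Bool) → Prop
  | [] => True
  | b :: s => goodRev σ s ∧ val2 σ s.reverse b ≠ 0

/-- All of II's selections along `u` are nonzero. -/
def good (σ : StratI2) (u : List (Bool × Bool)) : Prop := goodRev σ u.reverse

lemma good_nil (σ : StratI2) : good σ [] := trivial

lemma good_concat {σ : StratI2} {u : List (Bool × Bool)} {b : Bool × Bool} :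
    good σ (u ++ [b]) ↔ good σ u ∧ val2 σ u b ≠ 0 := by
  simp [good, goodRev, List.reverse_append]

lemma good_take {σ : StratI2} {u : List (Bool × Bool)} (h : good σ u) (m : ℕ) :
    good σ (u.take m) := by
  induction u using List.reverseRecOn generalizing m with
  | nil => simpa using h
  | append_singleton w b ih =>
    rcases le_or_gt m w.length with hm | hm
    · have : (w ++ [b]).take m = w.take m := by
        rw [List.take_append, Nat.sub_eq_zero_of_le hm]
        simp
      rw [this]
      exact ih (good_concat.1 h).1 m
    · have : (w ++ [b]).take m = w ++ [b] := by
        apply List.take_of_length_le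
        simp; omega
      rw [this]; exact h

/-- The canonical infinite extension of a finite string. -/
def extz (u : List (Bool × Bool)) : ℕ → Bool × Bool :=
  fun i => if h : i < u.length then u.get ⟨i, h⟩ else (false, false)

lemma prefix_extz (u : List (Bool × Bool)) {m : ℕ} (hm : m ≤ u.length) :
    (List.range m).map (extz u) = u.take m := by
  apply List.ext_getElem
  · simp; omega
  · intro i h1 h2
    simp only [List.getElem_map, List.getElem_range, List.getElem_take]
    have hi : i < m := by simpa using h1
    rw [extz, dif_pos (lt_of_lt_of_le hi hm)]
    simp

lemma prefix_extz_self (u : List (Bool × Bool)) :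
    (List.range u.length).map (extz u) = u := by
  rw [prefix_extz u le_rfl, List.take_length]

lemma take_succ_concat {u : List (Bool × Bool)} {m : ℕ} (hm : m < u.length) :
    u.take (m + 1) = u.take m ++ [u.get ⟨m, hm⟩] := by
  rw [List.take_succ, List.getElem?_eq_getElem hm]
  simp

section Win2

variable {μ : Measure Cantor} [IsProbabilityMeasure μ] {A : Set (Cantor × Cantor)}
  {σ : StratI2} (hσ : ∀ r : Run2, ConsI2 σ r → ¬ IIWinsRun2 μ 0 A r)

include hσ

lemma runOf_IOK (z : ℕ → Bool × Bool) (n : ℕ)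
    (hii : ∀ m < n, IIOK2 (runOf σ z) m) : IOK2 μ 0 (runOf σ z) n := by
  by_contra hn
  have hex : ∃ k, ¬ IOK2 μ 0 (runOf σ z) k := ⟨n, hn⟩
  classical
  have hNle : Nat.find hex ≤ n := Nat.find_min' hex hn
  apply hσ (runOf σ z) (consI2_runOf σ z)
  left
  refine ⟨Nat.find hex, fun m hm => ⟨?_, hii m (lt_of_lt_of_le hm hNle)⟩, Nat.find_spec hex⟩
  have := Nat.find_min hex hm
  exact not_not.1 this

lemma good_IIOK {u : List (Bool × Bool)} (hg : good σ u) (m : ℕ) (hm : m < u.length) :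
    IIOK2 (runOf σ (extz u)) m := by
  have h1 : IIOK2 (runOf σ (extz u)) m ↔ val2 σ (u.take m) (u.get ⟨m, hm⟩) ≠ 0 := by
    rw [IIOK2, sel2_runOf, prefix_extz u (le_of_lt hm)]
    rw [show extz u m = u.get ⟨m, hm⟩ from dif_pos hm]
  rw [h1]
  have hg2 : good σ (u.take (m + 1)) := good_take hg (m + 1)
  rw [take_succ_concat hm] at hg2
  exact (good_concat.1 hg2).2

lemma val2_legal {u : List (Bool × Bool)} (hg : good σ u) :
    (∀ b, 0 ≤ val2 σ u b ∧
      (val2 σ u b : ℝ) ≤ ((μ.prod μ) (rect (u ++ [b]))).toReal) ∧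
    (u = [] → 0 < ∑ b : Bool × Bool, val2 σ [] b) ∧
    (∀ u' b', u = u' ++ [b'] → (∑ b : Bool × Bool, val2 σ u b) = val2 σ u' b') := by
  have hIOK : IOK2 μ 0 (runOf σ (extz u)) u.length :=
    runOf_IOK hσ (extz u) u.length (fun m hm => good_IIOK hσ hg m hm)
  have hval : ∀ b, valI2 (runOf σ (extz u)) u.length b = val2 σ u b := by
    intro b; rw [valI2_runOf, prefix_extz_self]
  have hpath : path2 (runOf σ (extz u)) u.length = u := by
    rw [path2_runOf, prefix_extz_self]
  refine ⟨?_, ?_, ?_⟩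
  · intro b
    have hm : mOK2 μ (runOf σ (extz u)) u.length b := by
      cases hu : u.length with
      | zero => rw [hu] at hIOK; exact hIOK.1 b
      | succ k => rw [hu] at hIOK; exact hIOK.1 b
    rcases hm with ⟨h1, h2, _⟩
    rw [hval] at h1
    rw [hval, hpath] at h2
    exact ⟨h1, h2⟩
  · intro hu
    subst hu
    have h2 : (0 : ℝ) < ∑ b : Bool × Bool, ((val2 σ [] b : ℚ) : ℝ) := hIOK.2
    exact_mod_cast h2
  · intro u' b' hu
    subst hu
    have hlen : (u' ++ [b']).length = u'.length + 1 := by simp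
    rw [hlen] at hIOK
    have hpre1 : (List.range (u'.length + 1)).map (extz (u' ++ [b'])) = u' ++ [b'] := by
      have := prefix_extz_self (u' ++ [b'])
      rwa [hlen] at this
    have h1 : (List.range u'.length).map (extz (u' ++ [b'])) = u' := by
      rw [prefix_extz (u' ++ [b']) (by simp), List.take_left]
    have h2 : extz (u' ++ [b']) u'.length = b' := by
      rw [extz, dif_pos (by simp : u'.length < (u' ++ [b']).length)]
      simp
    calc (∑ b : Bool × Bool, val2 σ (u' ++ [b']) b)
        = ∑ b : Bool × Bool, (runOf σ (extz (u' ++ [b'])) (u'.length + 1)).1 b := by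
          refine Finset.sum_congr rfl fun b _ => ?_
          show val2 σ (u' ++ [b']) b = val2 σ ((List.range (u'.length + 1)).map (extz (u' ++ [b']))) b
          rw [hpre1]
      _ = sel2 (runOf σ (extz (u' ++ [b']))) u'.length := hIOK.2
      _ = val2 σ u' b' := by rw [sel2_runOf, h1, h2]

end Win2
/-! ### Rectangles, level sets and the closed set -/

/-- The length-`n` prefix of a pair of sequences. -/
def pre2 (p : Cantor × Cantor) (n : ℕ) : List (Bool × Bool) :=
  (List.range n).map (fun i => (p.1 i, p.2 i))

@[simp] lemma pre2_length (p : Cantor × Cantor) (n : ℕ) : (pre2 p n).length = n := by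
  simp [pre2]

@[simp] lemma pre2_getElem (p : Cantor × Cantor) (n i : ℕ) (h : i < (pre2 p n).length) :
    (pre2 p n)[i] = (p.1 i, p.2 i) := by
  simp [pre2]

lemma pre2_succ (p : Cantor × Cantor) (n : ℕ) :
    pre2 p (n + 1) = pre2 p n ++ [(p.1 n, p.2 n)] := by
  simp [pre2, List.range_succ]

lemma mem_rect_iff {u : List (Bool × Bool)} {p : Cantor × Cantor} :
    p ∈ rect u ↔ ∀ i, (h : i < u.length) → (p.1 i, p.2 i) = u[i] := by
  show p.1 ∈ cyl (u.map Prod.fst) ∧ p.2 ∈ cyl (u.map Prod.snd) ↔ _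
  rw [mem_cyl_iff, mem_cyl_iff]
  constructor
  · rintro ⟨h1, h2⟩ i h
    have e1 := h1 i (by simpa using h)
    have e2 := h2 i (by simpa using h)
    rw [List.get_eq_getElem, List.getElem_map] at e1 e2
    rw [Prod.ext_iff]
    exact ⟨e1, e2⟩
  · intro h
    constructor <;> intro i hi
    · have hi' : i < u.length := by simpa using hi
      rw [List.get_eq_getElem, List.getElem_map]
      exact congrArg Prod.fst (h i hi')
    · have hi' : i < u.length := by simpa using hi
      rw [List.get_eq_getElem, List.getElem_map]
      exact congrArg Prod.snd (h i hi')

lemma mem_rect_iff_pre2 {u : List (Bool × Bool)} {p : Cantor × Cantor} :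
    p ∈ rect u ↔ pre2 p u.length = u := by
  rw [mem_rect_iff]
  constructor
  · intro h
    apply List.ext_getElem (by simp)
    intro i h1 h2
    rw [pre2_getElem]
    exact h i h2
  · intro h i hi
    have := List.getElem_of_eq h (by simpa using hi : i < (pre2 p u.length).length)
    rw [pre2_getElem] at this
    exact this

lemma measurableSet_rect (u : List (Bool × Bool)) : MeasurableSet (rect u) :=
  (measurableSet_cyl _).prod (measurableSet_cyl _)

lemma isOpen_rect (u : List (Bool × Bool)) : IsOpen (rect u) :=
  (isOpen_cyl _).prod (isOpen_cyl _)

/-- The set of pairs whose length-`n` prefix is `good`. -/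
def Vset (σ : StratI2) (n : ℕ) : Set (Cantor × Cantor) := {p | good σ (pre2 p n)}

lemma isClosed_Vset (σ : StratI2) (n : ℕ) : IsClosed (Vset σ n) := by
  rw [← isOpen_compl_iff]
  have hrw : (Vset σ n)ᶜ =
      ⋃ u ∈ {u : List (Bool × Bool) | u.length = n ∧ ¬ good σ u}, rect u := by
    ext p
    simp only [Set.mem_compl_iff, Vset, Set.mem_setOf_eq, Set.mem_iUnion, exists_prop]
    constructor
    · intro hbad
      exact ⟨pre2 p n, ⟨pre2_length p n, hbad⟩,
        mem_rect_iff_pre2.2 (by rw [pre2_length])⟩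
    · rintro ⟨u, ⟨hlen, hbad⟩, hp⟩
      have h := mem_rect_iff_pre2.1 hp
      rw [hlen] at h
      rw [h]; exact hbad
  rw [hrw]
  exact isOpen_biUnion (fun u _ => isOpen_rect u)

lemma Vset_antitone (σ : StratI2) (n : ℕ) : Vset σ (n + 1) ⊆ Vset σ n := by
  intro p hp
  have : good σ (pre2 p (n + 1)) := hp
  rw [pre2_succ] at this
  exact (good_concat.1 this).1

/-- Weight of the node `u`. -/
def wtRev (σ : StratI2) : List (Bool × Bool) → ℚ
  | [] => ∑ b : Bool × Bool, val2 σ [] b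
  | b :: s => val2 σ s.reverse b

def wt (σ : StratI2) (u : List (Bool × Bool)) : ℚ := wtRev σ u.reverse

lemma wt_nil (σ : StratI2) : wt σ [] = ∑ b : Bool × Bool, val2 σ [] b := rfl

lemma wt_concat (σ : StratI2) (u : List (Bool × Bool)) (b : Bool × Bool) :
    wt σ (u ++ [b]) = val2 σ u b := by
  simp [wt, wtRev, List.reverse_append]

/-- The `n`-th level of the tree of good positions reachable against `σ`. -/
def LnF (σ : StratI2) : ℕ → Finset (List (Bool × Bool))
  | 0 => {[]}
  | n + 1 => ((LnF σ n ×ˢ (Finset.univ : Finset (Bool × Bool))).filter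
      (fun q => val2 σ q.1 q.2 ≠ 0)).image (fun q => q.1 ++ [q.2])

lemma LnF_succ_elim {σ : StratI2} {n : ℕ} {u : List (Bool × Bool)}
    (hu : u ∈ LnF σ (n + 1)) :
    ∃ w b, w ∈ LnF σ n ∧ val2 σ w b ≠ 0 ∧ u = w ++ [b] := by
  rw [LnF] at hu
  obtain ⟨q, hq, rfl⟩ := Finset.mem_image.1 hu
  rw [Finset.mem_filter, Finset.mem_product] at hq
  exact ⟨q.1, q.2, hq.1.1, hq.2, rfl⟩

lemma LnF_spec {σ : StratI2} : ∀ {n : ℕ} {u : List (Bool × Bool)}, u ∈ LnF σ n →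
    u.length = n ∧ good σ u := by
  intro n
  induction n with
  | zero =>
    intro u hu
    rw [LnF, Finset.mem_singleton] at hu
    subst hu
    exact ⟨rfl, good_nil σ⟩
  | succ n ih =>
    intro u hu
    obtain ⟨w, b, hw, hvb, rfl⟩ := LnF_succ_elim hu
    obtain ⟨hl, hg⟩ := ih hw
    refine ⟨by simp [hl], good_concat.2 ⟨hg, hvb⟩⟩

section Win2b

variable {μ : Measure Cantor} [IsProbabilityMeasure μ] {A : Set (Cantor × Cantor)}
  {σ : StratI2} (hσ : ∀ r : Run2, ConsI2 σ r → ¬ IIWinsRun2 μ 0 A r)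

include hσ

lemma LnF_sum : ∀ n, ∑ u ∈ LnF σ n, wt σ u = wt σ [] := by
  intro n
  induction n with
  | zero => simp [LnF]
  | succ n ih =>
    rw [LnF]
    rw [Finset.sum_image (fun q hq q' hq' h => ?inj)]
    case inj =>
      obtain ⟨h1, h2⟩ := List.append_inj' h (by simp)
      exact Prod.ext h1 (by simpa using h2)
    calc ∑ q ∈ (LnF σ n ×ˢ Finset.univ).filter (fun q => val2 σ q.1 q.2 ≠ 0),
            wt σ (q.1 ++ [q.2])
        = ∑ q ∈ (LnF σ n ×ˢ Finset.univ).filter (fun q => val2 σ q.1 q.2 ≠ 0),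
            val2 σ q.1 q.2 :=
          Finset.sum_congr rfl (fun q _ => wt_concat σ q.1 q.2)
      _ = ∑ q ∈ LnF σ n ×ˢ Finset.univ, val2 σ q.1 q.2 :=
          Finset.sum_filter_ne_zero _
      _ = ∑ u ∈ LnF σ n, ∑ b : Bool × Bool, val2 σ u b := Finset.sum_product ..
      _ = ∑ u ∈ LnF σ n, wt σ u := by
          refine Finset.sum_congr rfl fun u hu => ?_
          obtain ⟨hlen, hgood⟩ := LnF_spec hu
          rcases eq_or_ne u [] with rfl | hne
          · exact (wt_nil σ).symm
          · obtain ⟨w, b, hwb⟩ : ∃ w b, u = w ++ [b] :=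
              ⟨u.dropLast, u.getLast hne, (List.dropLast_append_getLast hne).symm⟩
            rw [(val2_legal hσ hgood).2.2 w b hwb, hwb, wt_concat]
      _ = wt σ [] := ih

lemma wt_nil_pos : 0 < wt σ [] := by
  rw [wt_nil]
  exact (val2_legal hσ (good_nil σ)).2.1 rfl

lemma level_bound (n : ℕ) :
    ENNReal.ofReal ((wt σ [] : ℚ) : ℝ) ≤ (μ.prod μ) (Vset σ (n + 1)) := by
  have hdisj : (↑(LnF σ (n + 1)) : Set (List (Bool × Bool))).PairwiseDisjoint rect := by
    intro u hu w hw hne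
    rw [Function.onFun, Set.disjoint_left]
    intro p hpu hpw
    apply hne
    have h1 := mem_rect_iff_pre2.1 hpu
    have h2 := mem_rect_iff_pre2.1 hpw
    rw [(LnF_spec (Finset.mem_coe.1 hu)).1] at h1
    rw [(LnF_spec (Finset.mem_coe.1 hw)).1] at h2
    rw [← h1, ← h2]
  have hsub : ∀ u ∈ LnF σ (n + 1), rect u ⊆ Vset σ (n + 1) := by
    intro u hu p hp
    have h1 := mem_rect_iff_pre2.1 hp
    rw [(LnF_spec hu).1] at h1
    show good σ (pre2 p (n + 1))
    rw [h1]
    exact (LnF_spec hu).2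
  have hle1 : ((wt σ [] : ℚ) : ℝ) ≤ ∑ u ∈ LnF σ (n + 1), ((μ.prod μ) (rect u)).toReal := by
    have hc : ((wt σ [] : ℚ) : ℝ) = ∑ u ∈ LnF σ (n + 1), ((wt σ u : ℚ) : ℝ) := by
      rw [← LnF_sum hσ (n + 1)]
      push_cast
      rfl
    rw [hc]
    apply Finset.sum_le_sum
    intro u hu
    obtain ⟨w, b, hw, hvb, rfl⟩ := LnF_succ_elim hu
    rw [wt_concat]
    exact ((val2_legal hσ (LnF_spec hw).2).1 b).2
  have hle2 : (∑ u ∈ LnF σ (n + 1), ((μ.prod μ) (rect u)).toReal) =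
      ((μ.prod μ) (⋃ u ∈ LnF σ (n + 1), rect u)).toReal := by
    rw [measure_biUnion_finset hdisj (fun u _ => measurableSet_rect u),
      ENNReal.toReal_sum (fun u _ => measure_ne_top _ _)]
  have hle3 : ((μ.prod μ) (⋃ u ∈ LnF σ (n + 1), rect u)).toReal ≤
      ((μ.prod μ) (Vset σ (n + 1))).toReal :=
    ENNReal.toReal_mono (measure_ne_top _ _)
      (measure_mono (Set.iUnion₂_subset hsub))
  apply ENNReal.ofReal_le_of_le_toReal
  linarith

lemma exists_closed_win2 :
    ∃ F : Set (Cantor × Cantor), IsClosed F ∧ (∀ p ∈ F, p ∉ A) ∧ 0 < (μ.prod μ) F := by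
  refine ⟨⋂ n, Vset σ (n + 1), isClosed_iInter (fun n => isClosed_Vset σ (n + 1)), ?_, ?_⟩
  · intro p hp hpA
    have hgood : ∀ n, good σ ((List.range n).map (fun i => (p.1 i, p.2 i))) := by
      intro n
      cases n with
      | zero => exact good_nil σ
      | succ m => exact Set.mem_iInter.1 hp m
    have hii : ∀ m, IIOK2 (runOf σ (fun i => (p.1 i, p.2 i))) m := by
      intro m
      show sel2 (runOf σ (fun i => (p.1 i, p.2 i))) m ≠ 0
      rw [sel2_runOf]
      have hg := hgood (m + 1)
      rw [prefix_succ] at hg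
      exact (good_concat.1 hg).2
    have hiok : ∀ n, IOK2 μ 0 (runOf σ (fun i => (p.1 i, p.2 i))) n :=
      fun n => runOf_IOK hσ _ n (fun m _ => hii m)
    apply hσ (runOf σ (fun i => (p.1 i, p.2 i))) (consI2_runOf σ _)
    right
    exact ⟨fun n => ⟨hiok n, hii n⟩, hpA⟩
  · have hiInf := Directed.measure_iInter (μ := μ.prod μ) (s := fun n => Vset σ (n + 1))
      (fun n => ((isClosed_Vset σ (n + 1)).measurableSet).nullMeasurableSet)
      ?_ ⟨0, measure_ne_top _ _⟩
    · rw [hiInf]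
      refine lt_of_lt_of_le ?_ (le_iInf fun n => level_bound hσ n)
      rw [ENNReal.ofReal_pos]
      exact_mod_cast wt_nil_pos hσ
    · exact (antitone_nat_of_succ_le (fun n => Vset_antitone σ (n + 1))).directed_ge

end Win2b
/-- If player I wins the two-dimensional game `G₂(0, A)`, then player I wins `G(0, B)`,
where `B` is the set of `x` such that player I does not win `G(0, A_x)`. -/
theorem winsI_sections_of_winsI2 (μ : Measure Cantor) [IsProbabilityMeasure μ]
    (A : Set (Cantor × Cantor)) (h : WinsI2 μ 0 A) :
    WinsI μ 0 {x : Cantor | ¬ WinsI μ 0 {y : Cantor | (x, y) ∈ A}} := by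
  obtain ⟨σ, hσ⟩ := h
  obtain ⟨F, hFc, hFA, hFpos⟩ := exists_closed_win2 hσ
  have hfm : Measurable (fun x => μ (Prod.mk x ⁻¹' F)) :=
    measurable_measure_prodMk_left hFc.measurableSet
  set G : Set Cantor := {x | 0 < μ (Prod.mk x ⁻¹' F)} with hGdef
  have hGm : MeasurableSet G := hfm measurableSet_Ioi
  have hμG : 0 < μ G := by
    rw [pos_iff_ne_zero]
    intro hG0
    have hf0 : (fun x => μ (Prod.mk x ⁻¹' F)) =ᵐ[μ] 0 := by
      rw [Filter.EventuallyEq, ae_iff]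
      refine measure_mono_null ?_ hG0
      intro x hx
      simp only [Set.mem_setOf_eq, Pi.zero_apply] at hx
      exact pos_iff_ne_zero.2 hx
    have hF0 : (μ.prod μ) F = 0 := by
      rw [Measure.prod_apply hFc.measurableSet, lintegral_congr_ae hf0]; simp
    exact hFpos.ne' hF0
  obtain ⟨K, hKG, hKcomp, hKpos⟩ := hGm.exists_lt_isCompact hμG
  have hKB : ∀ x ∈ K, WinsI μ 0 {y : Cantor | (x, y) ∈ A} := by
    intro x hx
    exact winsI_of_closed μ _ (Prod.mk x ⁻¹' F)
      (hFc.preimage (Continuous.prodMk_right x))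
      (fun y hy hmem => hFA (x, y) hy hmem) (hKG hx)
  exact winsI_of_closed μ _ K hKcomp.isClosed
    (fun x hxK hxB => hxB (hKB x hxK)) hKpos

end MeasureGame
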